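/- Let A be a Hopf algebra and L a unital symmetric partial A-module algebra, with φ: L → Hom(A,L), φ(x)(a) = a·x, and R = A ▷ φ(L). Then the following are equivalent: (i) φ(L) is a two-sided ideal of R; (ii) (a ▷ φ(x))·φ(y) = φ((a·x)y) for all a ∈ A, x,y ∈ L; (iii) the partial action of A on L is symmetric, i.e., c·((a·x)y) = (c₁a·x)(c₂·y) for all a,c ∈ A and x,y ∈ L. -/
import Mathlib

open TensorProduct

variable {k A L : Type*}

noncomputable def conv [Field k] [Ring A] [HopfAlgebra k A] [Ring L] [Algebra k L]
    (f g : A →ₗ[k] L) : A →ₗ[k] L :=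
  TensorProduct.lift ((LinearMap.mul k L).compl₁₂ f g) ∘ₗ Coalgebra.comul

section aux
variable [Field k] [Ring A] [HopfAlgebra k A] [Ring L] [Algebra k L]

lemma conv_add_right (f g g' : A →ₗ[k] L) : conv f (g + g') = conv f g + conv f g' := by
  unfold conv
  rw [show TensorProduct.lift ((LinearMap.mul k L).compl₁₂ f (g + g')) =
      TensorProduct.lift ((LinearMap.mul k L).compl₁₂ f g) +
      TensorProduct.lift ((LinearMap.mul k L).compl₁₂ f g') from
    TensorProduct.ext' fun x y => by
      simp [LinearMap.compl₁₂_apply, mul_add]]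
  rw [LinearMap.add_comp]

lemma conv_smul_right (c : k) (f g : A →ₗ[k] L) : conv f (c • g) = c • conv f g := by
  unfold conv
  rw [show TensorProduct.lift ((LinearMap.mul k L).compl₁₂ f (c • g)) =
      c • TensorProduct.lift ((LinearMap.mul k L).compl₁₂ f g) from
    TensorProduct.ext' fun x y => by
      simp [LinearMap.compl₁₂_apply, mul_smul_comm]]
  rw [LinearMap.smul_comp]

lemma conv_zero_right (f : A →ₗ[k] L) : conv f (0 : A →ₗ[k] L) = 0 := by
  unfold conv
  rw [show TensorProduct.lift ((LinearMap.mul k L).compl₁₂ f (0 : A →ₗ[k] L)) = 0 from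
    TensorProduct.ext' fun x y => by simp [LinearMap.compl₁₂_apply]]
  rw [LinearMap.zero_comp]

lemma conv_add_left (f f' g : A →ₗ[k] L) : conv (f + f') g = conv f g + conv f' g := by
  unfold conv
  rw [show TensorProduct.lift ((LinearMap.mul k L).compl₁₂ (f + f') g) =
      TensorProduct.lift ((LinearMap.mul k L).compl₁₂ f g) +
      TensorProduct.lift ((LinearMap.mul k L).compl₁₂ f' g) from
    TensorProduct.ext' fun x y => by
      simp [LinearMap.compl₁₂_apply, add_mul]]
  rw [LinearMap.add_comp]

lemma conv_smul_left (c : k) (f g : A →ₗ[k] L) : conv (c • f) g = c • conv f g := by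
  unfold conv
  rw [show TensorProduct.lift ((LinearMap.mul k L).compl₁₂ (c • f) g) =
      c • TensorProduct.lift ((LinearMap.mul k L).compl₁₂ f g) from
    TensorProduct.ext' fun x y => by
      simp [LinearMap.compl₁₂_apply, smul_mul_assoc]]
  rw [LinearMap.smul_comp]

lemma conv_zero_left (g : A →ₗ[k] L) : conv (0 : A →ₗ[k] L) g = 0 := by
  unfold conv
  rw [show TensorProduct.lift ((LinearMap.mul k L).compl₁₂ (0 : A →ₗ[k] L) g) = 0 from
    TensorProduct.ext' fun x y => by simp [LinearMap.compl₁₂_apply]]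
  rw [LinearMap.zero_comp]

lemma conv_apply_one (f g : A →ₗ[k] L) : conv f g 1 = f 1 * g 1 := by
  simp [conv, Bialgebra.comul_one, Algebra.TensorProduct.one_def,
    LinearMap.compl₁₂_apply]

end aux

/-- With `φ(x)(a) = a·x` and `R = A ▷ φ(L)`, the following are
equivalent: (i) `φ(L)` is a (two-sided) ideal of `R`;
(ii) `(a ▷ φ(x)) φ(y) = φ((a·x)y)` for all `a, x, y`;
(iii) the partial action is symmetric: `c·((a·x)y) = Σ (c₁a·x)(c₂·y)`. -/
theorem phiL_ideal_iff_symmetric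
    [Field k] [Ring A] [HopfAlgebra k A] [Ring L] [Algebra k L]
    (pact : A →ₗ[k] L →ₗ[k] L)
    (hp_one : ∀ x : L, pact 1 x = x)
    (hp_comp : ∀ (a b : A), ∀ x y : L,
      pact a (x * pact b y) =
        conv (pact.flip x) ((pact.flip y) ∘ₗ LinearMap.mulRight k b) a) :
    ∀ R : Submodule k (A →ₗ[k] L),
      R = Submodule.span k
            {f | ∃ (a : A) (x : L), f = (pact.flip x) ∘ₗ LinearMap.mulRight k a} →
      -- (i) φ(L) is a two-sided ideal of R
      (((∀ (x : L), ∀ g ∈ R, conv (pact.flip x) g ∈ Set.range pact.flip) ∧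
        (∀ (x : L), ∀ g ∈ R, conv g (pact.flip x) ∈ Set.range pact.flip))
      ↔
      -- (ii) (a ▷ φ(x)) φ(y) = φ((a·x)y)
      (∀ (a : A) (x y : L),
        conv ((pact.flip x) ∘ₗ LinearMap.mulRight k a) (pact.flip y) =
          pact.flip (pact a x * y))) ∧
      ((∀ (a : A) (x y : L),
        conv ((pact.flip x) ∘ₗ LinearMap.mulRight k a) (pact.flip y) =
          pact.flip (pact a x * y))
      ↔
      -- (iii) the partial action is symmetric
      (∀ (a c : A) (x y : L),
        pact c (pact a x * y) =
          conv ((pact.flip x) ∘ₗ LinearMap.mulRight k a) (pact.flip y) c)) := by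
  intro R hR
  constructor
  · constructor
    · -- (i) → (ii)
      rintro ⟨-, hright⟩ a x y
      have hmem : (pact.flip x) ∘ₗ LinearMap.mulRight k a ∈ R := by
        rw [hR]
        exact Submodule.subset_span ⟨a, x, rfl⟩
      obtain ⟨z, hz⟩ := hright y _ hmem
      have h1 : z = pact a x * y := by
        have := congrArg (fun f => f 1) hz
        simp only [LinearMap.flip_apply] at this
        rw [hp_one] at this
        rw [this, conv_apply_one]
        simp [hp_one]
      rw [← hz, h1]
    · -- (ii) → (i)
      intro hii
      constructor
      · intro x g hg
        rw [hR] at hg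
        induction hg using Submodule.span_induction with
        | mem f hf =>
          obtain ⟨b, y, rfl⟩ := hf
          refine ⟨x * pact b y, ?_⟩
          ext c
          simpa using (hp_comp c b x y)
        | zero => exact ⟨0, by simp [conv_zero_right]⟩
        | add g g' _ _ hg hg' =>
          obtain ⟨z, hz⟩ := hg; obtain ⟨z', hz'⟩ := hg'
          exact ⟨z + z', by rw [map_add, hz, hz', conv_add_right]⟩
        | smul c g _ hg =>
          obtain ⟨z, hz⟩ := hg
          exact ⟨c • z, by rw [map_smul, hz, conv_smul_right]⟩
      · intro x g hg
        rw [hR] at hg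
        induction hg using Submodule.span_induction with
        | mem f hf =>
          obtain ⟨b, y, rfl⟩ := hf
          exact ⟨pact b y * x, (hii b y x).symm⟩
        | zero => exact ⟨0, by simp [conv_zero_left]⟩
        | add g g' _ _ hg hg' =>
          obtain ⟨z, hz⟩ := hg; obtain ⟨z', hz'⟩ := hg'
          exact ⟨z + z', by rw [map_add, hz, hz', conv_add_left]⟩
        | smul c g _ hg =>
          obtain ⟨z, hz⟩ := hg
          exact ⟨c • z, by rw [map_smul, hz, conv_smul_left]⟩
  · constructor
    · intro h a c x y
      rw [h]
      simp
    · intro h a x y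
      ext c
      simpa using (h a c x y).symm
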